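/- Let p ≥ 1, let E₁,…,Eₙ and G₁,…,Gₙ be normed spaces over 𝕂, and let u_l : G_l → E_l be bounded linear operators, l = 1,…,n. Then for every z ∈ G₁⊗⋯⊗Gₙ, σ_p((u₁⊗⋯⊗uₙ)(z)) ≤ ‖u₁‖⋯‖uₙ‖ · σ_p(z), where σ_p on the left is taken on E₁⊗⋯⊗Eₙ and on the right on G₁⊗⋯⊗Gₙ. (σ_p has the metric mapping property.) -/

import Mathlib

open scoped TensorProduct
open PiTensorProduct

/-- The `ℓ_q` norm of a finite family of scalars, where `q` is the conjugate exponent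
of `p` (`1/p + 1/q = 1`, with `q = ∞`, i.e. the sup norm, when `p = 1`). -/
noncomputable def lqNorm {𝕜 : Type*} [RCLike 𝕜] (p : ℝ) {m : ℕ} (lam : Fin m → 𝕜) : ℝ :=
  if p = 1 then ⨆ j, ‖lam j‖ else (∑ j, ‖lam j‖ ^ (p / (p - 1))) ^ ((p - 1) / p)

/-- `sup_{‖φ_l‖ ≤ 1} Σ_j |φ₁(x_{1,j}) ⋯ φₙ(x_{n,j})|^p`. -/
noncomputable def supTerm (𝕜 : Type*) [RCLike 𝕜] {n : ℕ} {E : Fin n → Type*}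
    [∀ i, NormedAddCommGroup (E i)] [∀ i, NormedSpace 𝕜 (E i)]
    (p : ℝ) {m : ℕ} (x : Fin m → Π i, E i) : ℝ :=
  ⨆ φ : {φ : Π i, E i →L[𝕜] 𝕜 // ∀ i, ‖φ i‖ ≤ 1},
    ∑ j, (∏ i, ‖φ.1 i (x j i)‖) ^ p

/-- The tensor norm `σ_p` on `E₁ ⊗ ⋯ ⊗ Eₙ`. -/
noncomputable def sigmaNorm {𝕜 : Type*} [RCLike 𝕜] {n : ℕ} {E : Fin n → Type*}
    [∀ i, NormedAddCommGroup (E i)] [∀ i, NormedSpace 𝕜 (E i)]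
    (p : ℝ) (u : ⨂[𝕜] i, E i) : ℝ :=
  sInf { r : ℝ | ∃ (m : ℕ) (lam : Fin m → 𝕜) (x : Fin m → Π i, E i),
    u = (∑ j, lam j • ⨂ₜ[𝕜] i, x j i) ∧
    r = lqNorm p lam * (supTerm 𝕜 p x) ^ (1/p) }

section aux

variable {𝕜 : Type*} [RCLike 𝕜] {n : ℕ} {E : Fin n → Type*}
  [∀ i, NormedAddCommGroup (E i)] [∀ i, NormedSpace 𝕜 (E i)]

lemma lqNorm_nonneg (p : ℝ) {m : ℕ} (lam : Fin m → 𝕜) : 0 ≤ lqNorm p lam := by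
  unfold lqNorm
  split
  · exact Real.iSup_nonneg fun j => norm_nonneg _
  · exact Real.rpow_nonneg
      (Finset.sum_nonneg fun j _ => Real.rpow_nonneg (norm_nonneg _) _) _

lemma supTerm_nonneg (p : ℝ) {m : ℕ} (x : Fin m → Π i, E i) : 0 ≤ supTerm 𝕜 p x :=
  Real.iSup_nonneg fun φ => Finset.sum_nonneg fun j _ =>
    Real.rpow_nonneg (Finset.prod_nonneg fun i _ => norm_nonneg _) _

lemma supTerm_bddAbove {p : ℝ} (hp : 0 ≤ p) {m : ℕ} (x : Fin m → Π i, E i) :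
    BddAbove (Set.range fun φ : {φ : Π i, E i →L[𝕜] 𝕜 // ∀ i, ‖φ i‖ ≤ 1} =>
      ∑ j, (∏ i, ‖φ.1 i (x j i)‖) ^ p) := by
  refine ⟨∑ j, (∏ i, ‖x j i‖) ^ p, ?_⟩
  rintro _ ⟨φ, rfl⟩
  refine Finset.sum_le_sum fun j _ => ?_
  refine Real.rpow_le_rpow (Finset.prod_nonneg fun i _ => norm_nonneg _)
    (Finset.prod_le_prod (fun i _ => norm_nonneg _) fun i _ => ?_) hp
  calc ‖φ.1 i (x j i)‖ ≤ ‖φ.1 i‖ * ‖x j i‖ := (φ.1 i).le_opNorm _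
    _ ≤ 1 * ‖x j i‖ := by gcongr; exact φ.2 i
    _ = ‖x j i‖ := one_mul _

lemma le_supTerm {p : ℝ} (hp : 0 ≤ p) {m : ℕ} (x : Fin m → Π i, E i)
    (φ : {φ : Π i, E i →L[𝕜] 𝕜 // ∀ i, ‖φ i‖ ≤ 1}) :
    ∑ j, (∏ i, ‖φ.1 i (x j i)‖) ^ p ≤ supTerm 𝕜 p x :=
  le_ciSup (supTerm_bddAbove hp x) φ

lemma exists_repr (z : ⨂[𝕜] i, E i) : ∃ (m : ℕ) (lam : Fin m → 𝕜)
    (x : Fin m → Π i, E i), z = ∑ j, lam j • ⨂ₜ[𝕜] i, x j i := by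
  induction z using PiTensorProduct.induction_on with
  | smul_tprod c f => exact ⟨1, fun _ => c, fun _ => f, by simp⟩
  | add a b ha hb =>
    obtain ⟨m₁, l₁, x₁, rfl⟩ := ha
    obtain ⟨m₂, l₂, x₂, rfl⟩ := hb
    refine ⟨m₁ + m₂, Fin.append l₁ l₂, Fin.append x₁ x₂, ?_⟩
    rw [Fin.sum_univ_add]
    simp [Fin.append_left, Fin.append_right]

lemma supTerm_comp_le {G : Fin n → Type*} [∀ i, NormedAddCommGroup (G i)]
    [∀ i, NormedSpace 𝕜 (G i)] (hn : 1 ≤ n) (p : ℝ) (hp : 1 ≤ p)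
    (u : Π i, G i →L[𝕜] E i) {m : ℕ} (x : Fin m → Π i, G i) :
    supTerm 𝕜 p (fun j i => u i (x j i)) ≤ (∏ i, ‖u i‖) ^ p * supTerm 𝕜 p x := by
  have hp0 : (0:ℝ) < p := lt_of_lt_of_le one_pos hp
  haveI : Nonempty {φ : Π i, E i →L[𝕜] 𝕜 // ∀ i, ‖φ i‖ ≤ 1} :=
    ⟨⟨fun _ => 0, fun i => by simp⟩⟩
  refine ciSup_le fun φ => ?_
  by_cases hu : ∀ i, ‖u i‖ ≠ 0
  · set ψ : Π i, G i →L[𝕜] 𝕜 :=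
      fun i => ((‖u i‖ : 𝕜))⁻¹ • ((φ.1 i).comp (u i)) with hψ
    have hψnorm : ∀ i, ‖ψ i‖ ≤ 1 := by
      intro i
      show ‖((‖u i‖ : 𝕜))⁻¹ • ((φ.1 i).comp (u i))‖ ≤ 1
      refine le_trans (ContinuousLinearMap.opNorm_smul_le _ _) ?_
      rw [norm_inv, RCLike.norm_ofReal, abs_of_nonneg (norm_nonneg _),
        inv_mul_le_iff₀ ((hu i).lt_of_le' (norm_nonneg _)), mul_one]
      calc ‖(φ.1 i).comp (u i)‖ ≤ ‖φ.1 i‖ * ‖u i‖ := (φ.1 i).opNorm_comp_le _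
        _ ≤ 1 * ‖u i‖ := by gcongr; exact φ.2 i
        _ = ‖u i‖ := one_mul _
    have hval : ∀ j i, ‖φ.1 i (u i (x j i))‖ = ‖u i‖ * ‖ψ i (x j i)‖ := by
      intro j i
      rw [hψ]
      simp only [ContinuousLinearMap.smul_apply, ContinuousLinearMap.comp_apply,
        norm_smul, norm_inv, RCLike.norm_ofReal, abs_of_nonneg (norm_nonneg _)]
      field_simp
      exact (mul_div_cancel_right₀ _ (hu i)).symm
    calc ∑ j, (∏ i, ‖φ.1 i (u i (x j i))‖) ^ p
        = ∑ j, ((∏ i, ‖u i‖) * ∏ i, ‖ψ i (x j i)‖) ^ p := by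
          simp_rw [hval, Finset.prod_mul_distrib]
      _ = (∏ i, ‖u i‖) ^ p * ∑ j, (∏ i, ‖ψ i (x j i)‖) ^ p := by
          rw [Finset.mul_sum]
          refine Finset.sum_congr rfl fun j _ => ?_
          rw [Real.mul_rpow (Finset.prod_nonneg fun i _ => norm_nonneg _)
            (Finset.prod_nonneg fun i _ => norm_nonneg _)]
      _ ≤ (∏ i, ‖u i‖) ^ p * supTerm 𝕜 p x := by
          refine mul_le_mul_of_nonneg_left ?_
            (Real.rpow_nonneg (Finset.prod_nonneg fun i _ => norm_nonneg _) _)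
          exact le_supTerm hp0.le x ⟨ψ, hψnorm⟩
  · push_neg at hu
    obtain ⟨i₀, hi₀⟩ := hu
    have hu0 : u i₀ = 0 := by
      ext v; simpa using ContinuousLinearMap.le_of_opNorm_le _ (le_of_eq hi₀) v
    have : ∀ j : Fin m, (∏ i, ‖φ.1 i (u i (x j i))‖) ^ p = 0 := by
      intro j
      rw [Finset.prod_eq_zero (Finset.mem_univ i₀) (by rw [hu0]; simp),
        Real.zero_rpow hp0.ne']
    rw [Finset.sum_congr rfl fun j _ => this j, Finset.sum_const, smul_zero]
    exact mul_nonneg (Real.rpow_nonneg (Finset.prod_nonneg fun i _ => norm_nonneg _) _)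
      (supTerm_nonneg p x)

end aux

/-- `σ_p` has the metric mapping property: for bounded linear operators `u_l : G_l → E_l`,
`σ_p((u₁ ⊗ ⋯ ⊗ uₙ)(z)) ≤ ‖u₁‖ ⋯ ‖uₙ‖ · σ_p(z)`. -/
theorem sigmaNorm_metric_mapping {𝕜 : Type*} [RCLike 𝕜] {n : ℕ} (hn : 1 ≤ n)
    (E : Fin n → Type*) [∀ i, NormedAddCommGroup (E i)] [∀ i, NormedSpace 𝕜 (E i)]
    (G : Fin n → Type*) [∀ i, NormedAddCommGroup (G i)] [∀ i, NormedSpace 𝕜 (G i)]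
    (p : ℝ) (hp : 1 ≤ p) (u : Π i, G i →L[𝕜] E i) (z : ⨂[𝕜] i, G i) :
    sigmaNorm p (PiTensorProduct.map (fun i => (u i).toLinearMap) z)
      ≤ (∏ i, ‖u i‖) * sigmaNorm p z := by
  have hp0 : (0:ℝ) < p := lt_of_lt_of_le one_pos hp
  set C : ℝ := ∏ i, ‖u i‖ with hC
  have hC0 : 0 ≤ C := Finset.prod_nonneg fun i _ => norm_nonneg _
  set S' : Set ℝ := { r : ℝ | ∃ (m : ℕ) (lam : Fin m → 𝕜) (x : Fin m → Π i, E i),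
    (PiTensorProduct.map (fun i => (u i).toLinearMap) z) = (∑ j, lam j • ⨂ₜ[𝕜] i, x j i) ∧
    r = lqNorm p lam * (supTerm 𝕜 p x) ^ (1/p) } with hS'
  have hbdd : BddBelow S' := by
    refine ⟨0, ?_⟩
    rintro r ⟨m, lam, x, -, rfl⟩
    exact mul_nonneg (lqNorm_nonneg p lam) (Real.rpow_nonneg (supTerm_nonneg p x) _)
  have key : ∀ r ∈ { r : ℝ | ∃ (m : ℕ) (lam : Fin m → 𝕜) (x : Fin m → Π i, G i),
      z = (∑ j, lam j • ⨂ₜ[𝕜] i, x j i) ∧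
      r = lqNorm p lam * (supTerm 𝕜 p x) ^ (1/p) },
      sigmaNorm p (PiTensorProduct.map (fun i => (u i).toLinearMap) z) ≤ C * r := by
    rintro r ⟨m, lam, x, hz, rfl⟩
    have hmem : lqNorm p lam * (supTerm 𝕜 p (fun j i => u i (x j i))) ^ (1/p) ∈ S' := by
      refine ⟨m, lam, fun j i => u i (x j i), ?_, rfl⟩
      rw [hz]
      simp [PiTensorProduct.map_tprod]
    have h1 : sigmaNorm p (PiTensorProduct.map (fun i => (u i).toLinearMap) z)
        ≤ lqNorm p lam * (supTerm 𝕜 p (fun j i => u i (x j i))) ^ (1/p) :=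
      csInf_le hbdd hmem
    refine h1.trans ?_
    have h2 : (supTerm 𝕜 p (fun j i => u i (x j i))) ^ (1/p)
        ≤ C * (supTerm 𝕜 p x) ^ (1/p) := by
      calc (supTerm 𝕜 p (fun j i => u i (x j i))) ^ (1/p)
          ≤ (C ^ p * supTerm 𝕜 p x) ^ (1/p) :=
            Real.rpow_le_rpow (supTerm_nonneg p _)
              (supTerm_comp_le hn p hp u x) (by positivity)
        _ = (C ^ p) ^ (1/p) * (supTerm 𝕜 p x) ^ (1/p) :=
            Real.mul_rpow (Real.rpow_nonneg hC0 _) (supTerm_nonneg p x)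
        _ = C * (supTerm 𝕜 p x) ^ (1/p) := by
            rw [← Real.rpow_mul hC0, mul_one_div_cancel hp0.ne', Real.rpow_one]
    calc lqNorm p lam * (supTerm 𝕜 p (fun j i => u i (x j i))) ^ (1/p)
        ≤ lqNorm p lam * (C * (supTerm 𝕜 p x) ^ (1/p)) :=
          mul_le_mul_of_nonneg_left h2 (lqNorm_nonneg p lam)
      _ = C * (lqNorm p lam * (supTerm 𝕜 p x) ^ (1/p)) := by ring
  obtain ⟨m₀, lam₀, x₀, hz₀⟩ := exists_repr z
  have hne : (lqNorm p lam₀ * (supTerm 𝕜 p x₀) ^ (1/p)) ∈ { r : ℝ |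
      ∃ (m : ℕ) (lam : Fin m → 𝕜) (x : Fin m → Π i, G i),
      z = (∑ j, lam j • ⨂ₜ[𝕜] i, x j i) ∧
      r = lqNorm p lam * (supTerm 𝕜 p x) ^ (1/p) } := ⟨m₀, lam₀, x₀, hz₀, rfl⟩
  rcases hC0.eq_or_lt with hCeq | hCpos
  · have h1 := key _ hne
    rw [← hCeq] at h1 ⊢
    simpa using h1
  · show sigmaNorm p _ ≤ C * sigmaNorm p z
    unfold sigmaNorm
    rw [mul_comm, ← div_le_iff₀ hCpos]
    refine le_csInf ⟨_, hne⟩ fun r hr => ?_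
    rw [div_le_iff₀ hCpos, mul_comm]
    exact key r hr
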